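/- Let E be a finite set of conflict edges with |E| ≥ 1, let d_min and Ψ be real numbers with 0 ≤ d_min < Ψ, and set the penalty factor φ = 2·|E|·(Ψ − d_min). Consider a feasible solution with active edge set A ⊆ E and distances d_A : A → ℝ satisfying d_min ≤ d_A(e) ≤ Ψ for all e ∈ A, whose penalized objective equals its objective f_feas = ∑_{e ∈ A} (d_A(e) − Ψ) since its total violation count is zero. Consider an infeasible solution with active edge set B, distances d_B : B → ℝ satisfying 0 ≤ d_B(e) ≤ Ψ for all e ∈ B, and total violation count v ≥ 1, whose penalized objective is f_p = ∑_{e ∈ B} (d_B(e) − Ψ) − φ·v. Then f_p < f_feas. That is, with this calibration of φ the penalized objective function never evaluates an infeasible solution more favorably than any feasible solution. -/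

import Mathlib

/-- With `|E| ≥ 1`, `0 ≤ d_min < Ψ`, and penalty factor
`φ = 2·|E|·(Ψ − d_min)`, the penalized objective of any infeasible solution
(active edges `B` with distances in `[0, Ψ]`, violation count `v ≥ 1`) is strictly
smaller than the objective of any feasible solution (active edges `A ⊆ E` with
distances in `[d_min, Ψ]`). -/
theorem ssap_penalty_calibration
    {α β : Type*} [DecidableEq α]
    (E : Finset α) (hE : 1 ≤ E.card)
    (dmin Ψ : ℝ) (hdmin : 0 ≤ dmin) (hΨ : dmin < Ψ)
    (φ : ℝ) (hφ : φ = 2 * E.card * (Ψ - dmin))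
    (A : Finset α) (hAE : A ⊆ E) (dA : α → ℝ)
    (hdA : ∀ e ∈ A, dmin ≤ dA e ∧ dA e ≤ Ψ)
    (B : Finset β) (dB : β → ℝ)
    (hdB : ∀ e ∈ B, 0 ≤ dB e ∧ dB e ≤ Ψ)
    (v : ℕ) (hv : 1 ≤ v) :
    ∑ e ∈ B, (dB e - Ψ) - φ * v < ∑ e ∈ A, (dA e - Ψ) := by
  have hB0 : ∑ e ∈ B, (dB e - Ψ) ≤ 0 := by
    apply Finset.sum_nonpos
    intro e he
    linarith [(hdB e he).2]
  have hA0 : (A.card : ℝ) * (dmin - Ψ) ≤ ∑ e ∈ A, (dA e - Ψ) := by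
    have := Finset.sum_le_sum (fun e he => by linarith [(hdA e he).1] :
      ∀ e ∈ A, dmin - Ψ ≤ dA e - Ψ)
    simpa only [Finset.sum_const, nsmul_eq_mul] using this
  have hcard : (A.card : ℝ) ≤ E.card := by
    exact_mod_cast Finset.card_le_card hAE
  have hE1 : (1 : ℝ) ≤ E.card := by exact_mod_cast hE
  have hv1 : (1 : ℝ) ≤ v := by exact_mod_cast hv
  have hφpos : 0 < φ := by
    rw [hφ]; nlinarith
  have : (E.card : ℝ) * (Ψ - dmin) < φ * v := by
    rw [hφ]
    nlinarith
  nlinarith
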